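/- Let p > d ≥ 1, let U ∈ ℝ^{p×d} and V ∈ ℝ^{p×(p−d)} be such that D = [U, V] ∈ ℝ^{p×p} is orthogonal, let Σ ∈ ℝ^{d×d} be symmetric positive definite, let σ > 0, set Δ = diag(Σ, σ² I_{p−d}), S = D Δ Dᵀ, and D̃ = [U, 0_{p×(p−d)}]. Then for every m ∈ ℝ^d and every y ∈ ℝ^p: U m + (S − σ² I_p) S⁻¹ (y − U m) = U m + D̃ (I_p − σ² Δ⁻¹) D̃ᵀ (y − U m). -/

import Mathlib

open Matrix

/-- The conditional patch expectation in the BDLM denoising model: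
`Um + (S − σ²I) S⁻¹ (y − Um) = Um + D̃ (I − σ² Δ⁻¹) D̃ᵀ (y − Um)`. -/
theorem bdlm_patch_expectation (p d : ℕ) (hd : 1 ≤ d) (hdp : d < p)
    (U : Matrix (Fin p) (Fin d) ℝ) (V : Matrix (Fin p) (Fin (p - d)) ℝ)
    (Sig : Matrix (Fin d) (Fin d) ℝ) (hSig : Sig.PosDef)
    (σ : ℝ) (hσ : 0 < σ)
    (D : Matrix (Fin p) (Fin d ⊕ Fin (p - d)) ℝ) (hD : D = fromCols U V)
    (horth₁ : Dᵀ * D = 1) (horth₂ : D * Dᵀ = 1)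
    (Δ : Matrix (Fin d ⊕ Fin (p - d)) (Fin d ⊕ Fin (p - d)) ℝ)
    (hΔ : Δ = fromBlocks Sig 0 0 (σ ^ 2 • 1))
    (S : Matrix (Fin p) (Fin p) ℝ) (hS : S = D * Δ * Dᵀ)
    (Dt : Matrix (Fin p) (Fin d ⊕ Fin (p - d)) ℝ) (hDt : Dt = fromCols U 0) :
    ∀ (m : Fin d → ℝ) (y : Fin p → ℝ),
      U *ᵥ m + ((S - σ ^ 2 • 1) * S⁻¹) *ᵥ (y - U *ᵥ m)
        = U *ᵥ m + (Dt * ((1 : Matrix (Fin d ⊕ Fin (p - d)) (Fin d ⊕ Fin (p - d)) ℝ)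
            - σ ^ 2 • Δ⁻¹) * Dtᵀ) *ᵥ (y - U *ᵥ m) := by
  have hσ2 : (σ ^ 2 : ℝ) ≠ 0 := pow_ne_zero 2 hσ.ne'
  have hSiginv : Sig * Sig⁻¹ = 1 :=
    mul_nonsing_inv Sig (isUnit_iff_ne_zero.mpr hSig.det_pos.ne')
  have hΔi : Δ⁻¹ = fromBlocks Sig⁻¹ 0 0 ((σ ^ 2)⁻¹ • 1) := by
    apply inv_eq_right_inv
    rw [hΔ, fromBlocks_multiply]
    simp [hSiginv, smul_smul, mul_inv_cancel₀ hσ2, inv_mul_cancel₀ hσ2,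
      ← fromBlocks_one]
  have hΔmul : Δ * Δ⁻¹ = 1 := by
    rw [hΔi, hΔ, fromBlocks_multiply]
    simp [hSiginv, smul_smul, mul_inv_cancel₀ hσ2, inv_mul_cancel₀ hσ2,
      ← fromBlocks_one]
  have he : S * (D * Δ⁻¹ * Dᵀ) = 1 := by
    rw [hS]
    calc D * Δ * Dᵀ * (D * Δ⁻¹ * Dᵀ) = D * Δ * (Dᵀ * D) * Δ⁻¹ * Dᵀ := by
          simp only [Matrix.mul_assoc]
      _ = D * (Δ * Δ⁻¹) * Dᵀ := by
          rw [horth₁]; simp only [Matrix.mul_one, Matrix.mul_assoc]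
      _ = 1 := by rw [hΔmul, Matrix.mul_one, horth₂]
  have hSinv : S⁻¹ = D * Δ⁻¹ * Dᵀ := inv_eq_right_inv he
  have hSS : S * S⁻¹ = 1 := by rw [hSinv]; exact he
  -- key matrix identity
  have key : (S - σ ^ 2 • 1) * S⁻¹
      = Dt * ((1 : Matrix (Fin d ⊕ Fin (p - d)) (Fin d ⊕ Fin (p - d)) ℝ)
          - σ ^ 2 • Δ⁻¹) * Dtᵀ := by
    have hUV : U * Uᵀ + V * Vᵀ = 1 := by
      have := horth₂
      rw [hD, transpose_fromCols, fromCols_mul_fromRows] at this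
      exact this
    have lhs : (S - σ ^ 2 • 1) * S⁻¹
        = U * Uᵀ - σ ^ 2 • (U * Sig⁻¹ * Uᵀ) := by
      have hDinv : D * Δ⁻¹ * Dᵀ
          = U * Sig⁻¹ * Uᵀ + (σ ^ 2)⁻¹ • (V * Vᵀ) := by
        rw [hD, hΔi, transpose_fromCols, fromCols_mul_fromBlocks,
          fromCols_mul_fromRows]
        simp [Matrix.mul_smul, Matrix.smul_mul]
      rw [sub_mul, hSS, Matrix.smul_mul, one_mul, hSinv, hDinv]
      rw [smul_add, smul_smul, mul_inv_cancel₀ hσ2, one_smul, ← hUV]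
      abel
    have rhs : Dt * ((1 : Matrix (Fin d ⊕ Fin (p - d)) (Fin d ⊕ Fin (p - d)) ℝ)
          - σ ^ 2 • Δ⁻¹) * Dtᵀ
        = U * Uᵀ - σ ^ 2 • (U * Sig⁻¹ * Uᵀ) := by
      have h1 : ((1 : Matrix (Fin d ⊕ Fin (p - d)) (Fin d ⊕ Fin (p - d)) ℝ)
            - σ ^ 2 • Δ⁻¹)
          = fromBlocks (1 - σ ^ 2 • Sig⁻¹) 0 0
              ((1 : Matrix (Fin (p - d)) (Fin (p - d)) ℝ)
                - σ ^ 2 • ((σ ^ 2)⁻¹ • 1)) := by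
        rw [hΔi, ← fromBlocks_one, fromBlocks_smul]
        rw [sub_eq_add_neg, sub_eq_add_neg, sub_eq_add_neg,
          Matrix.fromBlocks_neg, fromBlocks_add]
        simp
      rw [hDt, h1, transpose_fromCols, fromCols_mul_fromBlocks,
        fromCols_mul_fromRows]
      simp [Matrix.mul_sub, Matrix.sub_mul, Matrix.mul_smul, Matrix.smul_mul,
        Matrix.mul_assoc]
    rw [lhs, rhs]
  intro m y
  rw [key]
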